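/- If every agent submits a 'valid' ranking (i.e., whenever an arm is ranked above the agent's optimal stable match, that arm truly has higher mean reward for the agent), then the agent-proposing Gale-Shapley algorithm run on these submitted rankings (with arms' true rankings) outputs a matching m such that every agent's matched arm has true mean reward at least that of their optimal stable match. -/
import Mathlib


/-- `(i, j)` is a blocking pair for matching `m`: arm `j` is not `i`'s match,
agent `i` prefers `j` to their match, and arm `j` is unmatched or prefers `i`
(a smaller `armRank` value means a better rank). -/
def BlockingPair {N K : ℕ} (pref : Fin N → Fin K → Fin K → Prop)
    (armRank : Fin K → Fin N → ℕ) (m : Fin N → Fin K) (i : Fin N) (j : Fin K) : Prop :=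
  m i ≠ j ∧ pref i j (m i) ∧
    ((∀ i', m i' ≠ j) ∨ ∃ i', m i' = j ∧ armRank j i < armRank j i')

/-- A matching (injective assignment of agents to arms) is stable iff it has no blocking pair. -/
def IsStableMatching {N K : ℕ} (pref : Fin N → Fin K → Fin K → Prop)
    (armRank : Fin K → Fin N → ℕ) (m : Fin N → Fin K) : Prop :=
  Function.Injective m ∧ ∀ i j, ¬ BlockingPair pref armRank m i j

/-- Agents' true preferences, induced by mean rewards. -/
def truePref {N K : ℕ} (μ : Fin N → Fin K → ℝ) : Fin N → Fin K → Fin K → Prop :=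
  fun i j j' => μ i j' < μ i j

/-- if every agent submits a valid ranking, then the agent-proposing
Gale–Shapley algorithm run on the submitted rankings (i.e. any matching `m` which is stable
for the submitted rankings and agent-optimal among such stable matchings) yields every
agent an arm whose true mean reward is at least that of their optimal stable match. -/
theorem etc_valid_rankings_give_optimal
    (N K : ℕ) (hNK : N ≤ K)
    (μ : Fin N → Fin K → ℝ) (armRank : Fin K → Fin N → ℕ)
    (harmRank : ∀ j, Function.Injective (armRank j))
    (hdistinct : ∀ i, Function.Injective (μ i))
    -- `mbar` is the agent-optimal stable matching for the true preferences
    (mbar : Fin N → Fin K)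
    (hbarStable : IsStableMatching (truePref μ) armRank mbar)
    (hbarOpt : ∀ m', IsStableMatching (truePref μ) armRank m' →
      ∀ i, μ i (m' i) ≤ μ i (mbar i))
    -- submitted rankings (smaller value = better rank), each a strict ranking of arms
    (r : Fin N → Fin K → ℕ)
    (hrInj : ∀ i, Function.Injective (r i))
    -- validity: any arm ranked above `mbar i` truly has a higher mean reward
    (hvalid : ∀ i j, r i j < r i (mbar i) → μ i (mbar i) < μ i j)
    -- `m` is the output of agent-proposing Gale–Shapley on the submitted rankings:
    -- stable w.r.t. the submitted rankings, and agent-optimal among such matchings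
    (m : Fin N → Fin K)
    (hmStable : IsStableMatching (fun i j j' => r i j < r i j') armRank m)
    (hmOpt : ∀ m', IsStableMatching (fun i j j' => r i j < r i j') armRank m' →
      ∀ i, r i (m i) ≤ r i (m' i)) :
    ∀ i, μ i (mbar i) ≤ μ i (m i) := by
  -- mbar is stable w.r.t. the submitted rankings
  have hbarStable' : IsStableMatching (fun i j j' => r i j < r i j') armRank mbar := by
    refine ⟨hbarStable.1, fun i j hb => ?_⟩
    obtain ⟨h1, h2, h3⟩ := hb
    exact hbarStable.2 i j ⟨h1, hvalid i j h2, h3⟩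
  intro i
  have h := hmOpt mbar hbarStable' i
  rcases lt_or_eq_of_le h with hlt | heq
  · exact le_of_lt (hvalid i (m i) hlt)
  · rw [hrInj i heq]
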